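/- For every y ∈ ℝ and every δ > 0: cosh(y − δ·arctan(y)) ≤ cosh(y) − δ·arctan(y)·sinh(y) + (π²/8)·δ²·( cosh(πδ/2) + cosh(y) ). -/

import Mathlib

open Real

private lemma nonneg_aux {f : ℝ → ℝ} (hd : Differentiable ℝ f) (h0 : f 0 = 0)
    (h' : ∀ x, 0 ≤ x → 0 ≤ deriv f x) : ∀ x, 0 ≤ x → 0 ≤ f x := by
  intro x hx
  have mono : MonotoneOn f (Set.Ici 0) := by
    apply monotoneOn_of_deriv_nonneg (convex_Ici 0) hd.continuous.continuousOn
      hd.differentiableOn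
    intro t ht
    rw [interior_Ici] at ht
    exact h' t (le_of_lt ht)
  have := mono (Set.mem_Ici.mpr le_rfl) hx hx
  rwa [h0] at this

private lemma sinh_le_mul_cosh {x : ℝ} (hx : 0 ≤ x) : Real.sinh x ≤ x * Real.cosh x := by
  have hd : Differentiable ℝ (fun x => x * Real.cosh x - Real.sinh x) := by
    fun_prop
  have key := nonneg_aux hd (by simp)
    (fun t ht => by
      have h1 : HasDerivAt (fun x : ℝ => x * Real.cosh x - Real.sinh x)
          (1 * Real.cosh t + t * Real.sinh t - Real.cosh t) t :=
        ((hasDerivAt_id t).mul (Real.hasDerivAt_cosh t)).sub (Real.hasDerivAt_sinh t)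
      rw [h1.deriv]
      have := Real.sinh_nonneg_iff.mpr ht
      nlinarith) x hx
  linarith

private lemma cosh_sub_one_le {c : ℝ} (hc : 0 ≤ c) :
    Real.cosh c - 1 ≤ c ^ 2 / 2 * Real.cosh c := by
  have hd : Differentiable ℝ (fun c : ℝ => c ^ 2 / 2 * Real.cosh c - Real.cosh c + 1) := by
    fun_prop
  have key := nonneg_aux hd (by simp)
    (fun t ht => by
      have h1 := ((((hasDerivAt_pow 2 t).div_const 2).mul (Real.hasDerivAt_cosh t)).sub
          (Real.hasDerivAt_cosh t)).add_const 1
      rw [(show HasDerivAt (fun c : ℝ => c ^ 2 / 2 * Real.cosh c - Real.cosh c + 1) _ t from h1).deriv]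
      push_cast
      norm_num
      have h2 := sinh_le_mul_cosh ht
      have h3 := Real.sinh_nonneg_iff.mpr ht
      nlinarith) c hc
  linarith

private lemma exp_neg_le {c : ℝ} (hc : 0 ≤ c) : Real.exp (-c) ≤ 1 - c + c ^ 2 / 2 := by
  have hd : Differentiable ℝ (fun c : ℝ => 1 - c + c ^ 2 / 2 - Real.exp (-c)) := by
    fun_prop
  have key := nonneg_aux hd (by simp)
    (fun t ht => by
      have h1 := (((hasDerivAt_const t (1:ℝ)).sub (hasDerivAt_id' t)).add
          ((hasDerivAt_pow 2 t).div_const 2)).sub ((hasDerivAt_neg t).exp)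
      rw [(show HasDerivAt (fun c : ℝ => 1 - c + c ^ 2 / 2 - Real.exp (-c)) _ t from h1).deriv]
      push_cast
      norm_num
      have h2 := Real.add_one_le_exp (-t)
      nlinarith) c hc
  linarith

/-- key Taylor bound for nonnegative arguments -/
private lemma taylor_bound {y c : ℝ} (hy : 0 ≤ y) (hc : 0 ≤ c) :
    Real.cosh (y - c) ≤ Real.cosh y - c * Real.sinh y
      + c ^ 2 / 2 * (Real.cosh c + Real.cosh y) := by
  have expand : Real.cosh (y - c)
      = Real.cosh y * Real.cosh c - Real.sinh y * Real.sinh c := Real.cosh_sub y c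
  have hsy : 0 ≤ Real.sinh y := Real.sinh_nonneg_iff.mpr hy
  have hcy : Real.cosh y - Real.sinh y = Real.exp (-y) := Real.cosh_sub_sinh y
  have hcc : Real.cosh c - Real.sinh c = Real.exp (-c) := Real.cosh_sub_sinh c
  have hey : Real.exp (-y) ≤ 1 := Real.exp_le_one_iff.mpr (by linarith)
  have heyp : 0 < Real.exp (-y) := Real.exp_pos _
  have h1 : Real.exp (-c) - 1 + c ≤ c ^ 2 / 2 := by have := exp_neg_le hc; linarith
  have h1' : 0 ≤ Real.exp (-c) - 1 + c := by have := Real.add_one_le_exp (-c); linarith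
  have h2 := cosh_sub_one_le hc
  have h3 : (1:ℝ) ≤ Real.cosh c := Real.one_le_cosh c
  -- cosh(y-c) - cosh y + c sinh y = sinh y * (exp(-c) - 1 + c) + exp(-y) * (cosh c - 1)
  have key : Real.cosh (y - c) - Real.cosh y + c * Real.sinh y
      = Real.sinh y * (Real.exp (-c) - 1 + c) + Real.exp (-y) * (Real.cosh c - 1) := by
    rw [expand, ← hcy, ← hcc]; ring
  have hsy_le : Real.sinh y ≤ Real.cosh y := by linarith
  have hy2 : Real.exp (-y) * (Real.cosh c - 1) ≤ Real.cosh c - 1 := by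
    nlinarith
  nlinarith [mul_le_mul_of_nonneg_left h1 hsy, sq_nonneg c]

/-- Second-order Taylor estimate for one Euler step of `dX = −arctan(X)dt`. -/
theorem stmt_8 :
    ∀ (y δ : ℝ), 0 < δ →
      Real.cosh (y - δ * Real.arctan y) ≤
        Real.cosh y - δ * Real.arctan y * Real.sinh y +
          (Real.pi ^ 2 / 8) * δ ^ 2 *
            (Real.cosh (Real.pi * δ / 2) + Real.cosh y) := by
  have main : ∀ y δ : ℝ, 0 < δ → 0 ≤ y →
      Real.cosh (y - δ * Real.arctan y) ≤
        Real.cosh y - δ * Real.arctan y * Real.sinh y +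
          (Real.pi ^ 2 / 8) * δ ^ 2 *
            (Real.cosh (Real.pi * δ / 2) + Real.cosh y) := by
    intro y δ hδ hy
    set c := δ * Real.arctan y with hc_def
    have hat : 0 ≤ Real.arctan y := by
      have := Real.arctan_strictMono.monotone hy
      rwa [Real.arctan_zero] at this
    have hc : 0 ≤ c := mul_nonneg hδ.le hat
    have hclt : c ≤ Real.pi * δ / 2 := by
      nlinarith [Real.arctan_lt_pi_div_two y]
    have hcoshc : Real.cosh c ≤ Real.cosh (Real.pi * δ / 2) := by
      rw [Real.cosh_le_cosh]
      rw [abs_of_nonneg hc, abs_of_nonneg (by positivity)]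
      exact hclt
    have hsq : c ^ 2 / 2 ≤ Real.pi ^ 2 / 8 * δ ^ 2 := by
      have h2 : Real.arctan y ≤ Real.pi / 2 := (Real.arctan_lt_pi_div_two y).le
      nlinarith [hat, hδ.le]
    have hsum : 0 ≤ Real.cosh c + Real.cosh y := by positivity
    have := taylor_bound hy hc
    have step : c ^ 2 / 2 * (Real.cosh c + Real.cosh y)
        ≤ Real.pi ^ 2 / 8 * δ ^ 2 * (Real.cosh (Real.pi * δ / 2) + Real.cosh y) := by
      have hpos : 0 ≤ Real.pi ^ 2 / 8 * δ ^ 2 := by positivity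
      have : Real.cosh c + Real.cosh y ≤ Real.cosh (Real.pi * δ / 2) + Real.cosh y := by
        linarith
      nlinarith [sq_nonneg c]
    calc Real.cosh (y - c) ≤ Real.cosh y - c * Real.sinh y
          + c ^ 2 / 2 * (Real.cosh c + Real.cosh y) := taylor_bound hy hc
      _ ≤ _ := by linarith
  intro y δ hδ
  rcases le_or_gt 0 y with hy | hy
  · exact main y δ hδ hy
  · have h := main (-y) δ hδ (by linarith)
    rw [Real.arctan_neg] at h
    have e1 : -y - δ * -Real.arctan y = -(y - δ * Real.arctan y) := by ring
    rw [e1, Real.cosh_neg, Real.cosh_neg, Real.sinh_neg] at h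
    linarith
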